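/- Let N be a positive integer and for each n set Z_n = ∑_{k=0}^{n} 1/(2k+1)² and q_n = ∑_{k=0}^{n} (−1)^k/(2k+1). Then the sequence y_N := Z_N − q_N² converges to π²/16 as N → ∞. -/

import Mathlib

open Filter Finset Real

lemma hasSum_odd_sq : HasSum (fun k : ℕ => (1 : ℝ) / (2 * (k : ℝ) + 1) ^ 2) (π ^ 2 / 8) := by
  set f : ℕ → ℝ := fun n : ℕ => (1 : ℝ) / (n : ℝ) ^ 2 with hf
  have htotal : HasSum f (π ^ 2 / 6) := hasSum_zeta_two
  have heven : HasSum (fun k : ℕ => f (2 * k)) (π ^ 2 / 24) := by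
    have h4 := htotal.mul_left (1 / 4)
    have he : (fun n : ℕ => (1:ℝ)/4 * f n) = fun k : ℕ => f (2 * k) := by
      funext n; simp only [hf]; push_cast; ring
    rw [he] at h4
    convert h4 using 1; rfl; ring
  have hodd : Summable (fun k : ℕ => f (2 * k + 1)) := by
    have hi : Function.Injective (fun n : ℕ => 2 * n + 1) := fun a b h => by simpa using h
    exact htotal.summable.comp_injective (i := fun n : ℕ => 2 * n + 1) hi
  obtain ⟨c, hc⟩ := hodd
  have := (heven.even_add_odd hc).unique htotal
  have hc8 : c = π ^ 2 / 8 := by linarith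
  rw [hc8] at hc
  have h2 : (fun k : ℕ => f (2 * k + 1)) = fun k : ℕ => (1:ℝ)/(2*(k:ℝ)+1)^2 := by
    funext k; simp only [hf]; push_cast; ring
  rwa [h2] at hc

theorem bernoulli_decomposition_tendsto :
    Filter.Tendsto
      (fun N : ℕ =>
        (∑ k ∈ Finset.range (N + 1), (1 : ℝ) / (2 * (k : ℝ) + 1) ^ 2) -
          (∑ k ∈ Finset.range (N + 1), (-1 : ℝ) ^ k / (2 * (k : ℝ) + 1)) ^ 2)
      Filter.atTop (nhds (Real.pi ^ 2 / 16)) := by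
  have h1 : Tendsto (fun N : ℕ => ∑ k ∈ Finset.range (N + 1),
      (1 : ℝ) / (2 * (k : ℝ) + 1) ^ 2) atTop (nhds (π ^ 2 / 8)) :=
    hasSum_odd_sq.tendsto_sum_nat.comp (tendsto_add_atTop_nat 1)
  have h2 : Tendsto (fun N : ℕ => ∑ k ∈ Finset.range (N + 1),
      (-1 : ℝ) ^ k / (2 * (k : ℝ) + 1)) atTop (nhds (π / 4)) :=
    Real.tendsto_sum_pi_div_four.comp (tendsto_add_atTop_nat 1)
  have := h1.sub (h2.pow 2)
  convert this using 2
  ring
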